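/- For real p, q > 0 with p·q > 1, the function λ ↦ λ^(q+1) - (p+1)·λ^q + p has a unique zero λ(p,q) in the interval (1, ∞), and this zero satisfies (p+1)q/(q+1) < λ(p,q) < p + 1. -/

import Mathlib

theorem stmt_3 (p q : ℝ) (hp : 0 < p) (hq : 0 < q) (hpq : 1 < p * q) :
    (∃! l : ℝ, 1 < l ∧ l ^ (q + 1) - (p + 1) * l ^ q + p = 0) ∧
    (∀ l : ℝ, 1 < l → l ^ (q + 1) - (p + 1) * l ^ q + p = 0 →
      (p + 1) * q / (q + 1) < l ∧ l < p + 1) := by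
  set a : ℝ := (p + 1) * q / (q + 1) with ha
  have hq1 : (0:ℝ) < q + 1 := by linarith
  have ha1 : 1 < a := by
    rw [ha, lt_div_iff₀ hq1]; nlinarith
  have hap : a < p + 1 := by
    rw [ha, div_lt_iff₀ hq1]; nlinarith
  set g : ℝ → ℝ := fun x => x ^ q * (p + 1 - x) with hgdef
  -- Q l = 0 ↔ g l = p
  have key : ∀ l : ℝ, 0 < l →
      (l ^ (q + 1) - (p + 1) * l ^ q + p = 0 ↔ g l = p) := by
    intro l hl
    have h1 : l ^ (q + 1) = l ^ q * l := Real.rpow_add_one hl.ne' q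
    simp only [hgdef]
    rw [h1]
    constructor <;> intro h <;> nlinarith
  -- derivative of g
  have hg : ∀ x : ℝ, 0 < x →
      HasDerivAt g (x ^ (q - 1) * ((p + 1) * q - (q + 1) * x)) x := by
    intro x hx
    have h1 : HasDerivAt (fun x : ℝ => x ^ q) (q * x ^ (q - 1)) x :=
      Real.hasDerivAt_rpow_const (Or.inl hx.ne')
    have h2 : HasDerivAt (fun x : ℝ => p + 1 - x) (-1) x := by
      simpa using (hasDerivAt_id x).const_sub (p + 1)
    have h3 := h1.mul h2
    refine h3.congr_deriv ?_
    have hq' : q - 1 + 1 = q := by ring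
    have hxq : x ^ q = x ^ (q - 1) * x := by
      rw [← Real.rpow_add_one hx.ne' (q - 1), hq']
    rw [hxq]; ring
  have hcont : ∀ x : ℝ, 0 < x → ContinuousAt g x := fun x hx =>
    (hg x hx).differentiableAt.continuousAt
  -- strict mono on [1, a]
  have hmono : StrictMonoOn g (Set.Icc 1 a) := by
    apply strictMonoOn_of_deriv_pos (convex_Icc 1 a)
    · exact fun x hx => (hcont x (by linarith [hx.1])).continuousWithinAt
    · intro x hx
      rw [interior_Icc] at hx
      have hx0 : 0 < x := by linarith [hx.1]
      rw [(hg x hx0).deriv]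
      have h2 : 0 < (p + 1) * q - (q + 1) * x := by
        have := hx.2
        rw [ha, lt_div_iff₀ hq1] at this
        nlinarith
      positivity
  -- strict anti on [a, ∞)
  have hanti : StrictAntiOn g (Set.Ici a) := by
    apply strictAntiOn_of_deriv_neg (convex_Ici a)
    · exact fun x hx => (hcont x (by linarith [Set.mem_Ici.mp hx])).continuousWithinAt
    · intro x hx
      rw [interior_Ici] at hx
      have hxa : a < x := hx
      have hx0 : 0 < x := by linarith
      rw [(hg x hx0).deriv]
      have h2 : (p + 1) * q - (q + 1) * x < 0 := by
        rw [ha, div_lt_iff₀ hq1] at hxa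
        nlinarith
      have h3 : 0 < x ^ (q - 1) := Real.rpow_pos_of_pos hx0 _
      nlinarith
  have hg1 : g 1 = p := by simp [hgdef, Real.one_rpow]
  have hga : p < g a := by
    have := hmono (Set.mem_Icc.mpr ⟨le_refl 1, ha1.le⟩)
      (Set.mem_Icc.mpr ⟨ha1.le, le_refl a⟩) ha1
    rwa [hg1] at this
  have hgp1 : g (p + 1) = 0 := by simp [hgdef]
  -- bounds for any root l > 1
  have hbound : ∀ l : ℝ, 1 < l → g l = p → a < l ∧ l < p + 1 := by
    intro l hl hgl
    have hl0 : 0 < l := by linarith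
    constructor
    · by_contra h
      push_neg at h
      -- l ≤ a, l > 1 ⇒ g l > g 1 = p
      have := hmono (Set.mem_Icc.mpr ⟨le_refl 1, by linarith⟩)
        (Set.mem_Icc.mpr ⟨hl.le, h⟩) hl
      rw [hg1, hgl] at this
      exact lt_irrefl p this
    · by_contra h
      push_neg at h
      -- p + 1 ≤ l ⇒ g l ≤ 0 < p
      have h1 : g l ≤ 0 := by
        have : p + 1 - l ≤ 0 := by linarith
        have h2 : 0 < l ^ q := Real.rpow_pos_of_pos hl0 _
        simp only [hgdef]
        nlinarith
      linarith [hgl ▸ h1]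
  -- existence via IVT on [a, p+1]
  have hcontOn : ContinuousOn g (Set.Icc a (p + 1)) := fun x hx =>
    (hcont x (by linarith [hx.1])).continuousWithinAt
  have hex : ∃ l ∈ Set.Ioo a (p + 1), g l = p := by
    have h := intermediate_value_Ioo' hap.le hcontOn
    have hmem : p ∈ Set.Ioo (g (p + 1)) (g a) := by
      rw [hgp1]; exact ⟨hp, hga⟩
    obtain ⟨l, hl, hgl⟩ := h hmem
    exact ⟨l, hl, hgl⟩
  obtain ⟨l, hlmem, hgl⟩ := hex
  have hl1 : 1 < l := lt_trans ha1 hlmem.1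
  have hl0 : 0 < l := by linarith
  constructor
  · refine ⟨l, ⟨hl1, (key l hl0).mpr hgl⟩, ?_⟩
    intro y ⟨hy1, hyQ⟩
    have hgy : g y = p := (key y (by linarith)).mp hyQ
    have hby := hbound y hy1 hgy
    exact hanti.injOn (Set.mem_Ici.mpr hby.1.le) (Set.mem_Ici.mpr hlmem.1.le)
      (by rw [hgy, hgl])
  · intro x hx1 hxQ
    exact hbound x hx1 ((key x (by linarith)).mp hxQ)
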